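/- Let E be a field and Γ a subgroup of ℝ. Let R be the set of elements of E((t^Γ)) whose support is either finite, or of order type ω and cofinal in ℝ. Then R is a subfield of E((t^Γ)). -/

import Mathlib

open Pointwise

noncomputable section OmegaAux

variable {Γ : AddSubgroup ℝ}

/-- The "slice" of a set of exponents below a real bound. -/
private def Sl (S : Set ↥Γ) (r : ℝ) : Set ↥Γ := {x ∈ S | (x : ℝ) ≤ r}

/-- A set of exponents all of whose bounded slices are finite. -/
private def BddSl (S : Set ↥Γ) : Prop := ∀ r : ℝ, (Sl S r).Finite

private theorem bddSl_mono {S T : Set ↥Γ} (h : S ⊆ T) (hT : BddSl T) : BddSl S :=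
  fun r => (hT r).subset fun x hx => ⟨h hx.1, hx.2⟩

private theorem bddSl_of_finite {S : Set ↥Γ} (h : S.Finite) : BddSl S :=
  fun _ => h.subset fun _ hx => hx.1

private theorem bddSl_union {S T : Set ↥Γ} (hS : BddSl S) (hT : BddSl T) :
    BddSl (S ∪ T) := by
  intro r
  refine ((hS r).union (hT r)).subset ?_
  rintro x ⟨hx | hx, hxr⟩
  · exact Or.inl ⟨hx, hxr⟩
  · exact Or.inr ⟨hx, hxr⟩

private theorem bddSl_add {S T : Set ↥Γ} {a b : ℝ} (hS : BddSl S) (hT : BddSl T)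
    (ha : ∀ x ∈ S, a ≤ (x : ℝ)) (hb : ∀ y ∈ T, b ≤ (y : ℝ)) : BddSl (S + T) := by
  intro r
  refine (((hS (r - b)).prod (hT (r - a))).image (fun p => p.1 + p.2)).subset ?_
  rintro z ⟨hz, hzr⟩
  obtain ⟨x, hx, y, hy, rfl⟩ := hz
  have hxy : (x : ℝ) + (y : ℝ) ≤ r := by exact_mod_cast hzr
  refine ⟨(x, y), ⟨⟨hx, ?_⟩, ⟨hy, ?_⟩⟩, rfl⟩
  · linarith [hb y hy]
  · linarith [ha x hx]

private theorem coe_msum (m : Multiset ↥Γ) :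
    ((m.sum : ↥Γ) : ℝ) = (m.map (fun z : ↥Γ => (z : ℝ))).sum := by
  induction m using Multiset.induction with
  | empty => simp
  | cons a s ih => simp [ih]

private theorem bddSl_closure {S : Set ↥Γ} {δ : ℝ} (hδ : 0 < δ)
    (hlb : ∀ x ∈ S, δ ≤ (x : ℝ)) (hS : BddSl S) :
    BddSl ((AddSubmonoid.closure S : AddSubmonoid ↥Γ) : Set ↥Γ) := by
  intro r
  set Tf : Finset ↥Γ := (hS r).toFinset with hTf
  set N : ℕ := ⌈r / δ⌉₊ with hN
  have hcover : Sl ((AddSubmonoid.closure S : AddSubmonoid ↥Γ) : Set ↥Γ) r ⊆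
      ⋃ n ∈ Set.Iic N, Set.range (fun c : Fin n → ↥Tf => ∑ i, ((c i : ↥Γ))) := by
    rintro x ⟨hx, hxr⟩
    obtain ⟨m, hmS, hmsum⟩ := AddSubmonoid.exists_multiset_of_mem_closure hx
    -- each element of `m` is at most `r` as a real
    have hmemle : ∀ y ∈ m, (y : ℝ) ≤ r := by
      intro y hy
      have h1 : ((y : ↥Γ) : ℝ) ≤ ((m.map (fun z : ↥Γ => (z : ℝ))).sum) := by
        refine Multiset.single_le_sum ?_ _ (Multiset.mem_map_of_mem _ hy)
        intro z hz
        obtain ⟨w, hw, rfl⟩ := Multiset.mem_map.mp hz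
        exact le_trans hδ.le (hlb w (hmS w hw))
      rw [← coe_msum, hmsum] at h1
      exact h1.trans hxr
    -- the cardinality of `m` is at most `N`
    have hcard : Multiset.card m ≤ N := by
      have h1 : (Multiset.card m : ℝ) * δ ≤ r := by
        have := Multiset.card_nsmul_le_sum
          (s := m.map (fun z : ↥Γ => (z : ℝ))) (a := δ) ?_
        · rw [Multiset.card_map] at this
          rw [← coe_msum, hmsum] at this
          calc (Multiset.card m : ℝ) * δ = Multiset.card m • δ := by
                rw [nsmul_eq_mul]
            _ ≤ (x : ℝ) := this
            _ ≤ r := hxr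
        · intro z hz
          obtain ⟨w, hw, rfl⟩ := Multiset.mem_map.mp hz
          exact hlb w (hmS w hw)
      have h3 : (Multiset.card m : ℝ) ≤ r / δ := (le_div_iff₀ hδ).mpr h1
      have h4 : (Multiset.card m : ℝ) ≤ (N : ℝ) := h3.trans (Nat.le_ceil _)
      exact_mod_cast h4
    -- write `x` as a sum over `Fin n`
    set l : List ↥Γ := m.toList with hl
    have hlen : l.length = Multiset.card m := Multiset.length_toList m
    have hmem : ∀ i : Fin l.length, l.get i ∈ Tf := by
      intro i
      have : l.get i ∈ m := by
        rw [← Multiset.mem_toList]; exact List.get_mem l i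
      rw [hTf, Set.Finite.mem_toFinset]
      exact ⟨hmS _ this, hmemle _ this⟩
    refine Set.mem_biUnion (show l.length ∈ Set.Iic N from hlen ▸ hcard) ?_
    refine ⟨fun i => ⟨l.get i, hmem i⟩, ?_⟩
    show ∑ i : Fin l.length, l.get i = x
    rw [← hmsum, ← Multiset.sum_toList]
    exact (Fin.sum_univ_fun_getElem l (fun x => x)).trans (by simp [hl])
  refine (Set.Finite.biUnion (Set.finite_Iic N) ?_).subset hcover
  intro n _
  exact Set.finite_range _

/-- An enumeration of a well-founded set that is unbounded above. -/
private def enumAux (S : Set ↥Γ) (wf : S.IsWF)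
    (hne : ∀ y : ↥Γ, (S ∩ Set.Ioi y).Nonempty) : ℕ → ↥Γ
  | 0 => wf.min ((hne 0).mono Set.inter_subset_left)
  | n + 1 => (wf.mono Set.inter_subset_left).min (hne (enumAux S wf hne n))

private theorem enumAux_mem (S : Set ↥Γ) (wf : S.IsWF)
    (hne : ∀ y : ↥Γ, (S ∩ Set.Ioi y).Nonempty) (n : ℕ) : enumAux S wf hne n ∈ S := by
  cases n with
  | zero => exact wf.min_mem _
  | succ k => exact ((wf.mono Set.inter_subset_left).min_mem (hne _)).1

private theorem enumAux_strictMono (S : Set ↥Γ) (wf : S.IsWF)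
    (hne : ∀ y : ↥Γ, (S ∩ Set.Ioi y).Nonempty) : StrictMono (enumAux S wf hne) := by
  apply strictMono_nat_of_lt_succ
  intro n
  exact ((wf.mono Set.inter_subset_left).min_mem (hne (enumAux S wf hne n))).2

private theorem enumAux_surj (S : Set ↥Γ) (wf : S.IsWF)
    (hne : ∀ y : ↥Γ, (S ∩ Set.Ioi y).Nonempty) (hS : BddSl S) {x : ↥Γ} (hx : x ∈ S) :
    x ∈ Set.range (enumAux S wf hne) := by
  by_contra hxr
  have hlt : ∀ n, enumAux S wf hne n < x := by
    intro n
    induction n with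
    | zero =>
      refine lt_of_le_of_ne (wf.min_le _ hx) ?_
      intro h; exact hxr ⟨0, h⟩
    | succ k ih =>
      have hmem : x ∈ S ∩ Set.Ioi (enumAux S wf hne k) := ⟨hx, ih⟩
      refine lt_of_le_of_ne ((wf.mono Set.inter_subset_left).min_le (hne _) hmem) ?_
      intro h; exact hxr ⟨k + 1, h⟩
  have hsub : Set.range (enumAux S wf hne) ⊆ Sl S (x : ℝ) := by
    rintro _ ⟨n, rfl⟩
    exact ⟨enumAux_mem S wf hne n, by exact_mod_cast (hlt n).le⟩
  exact Set.infinite_range_of_injective (enumAux_strictMono S wf hne).injective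
    ((hS (x : ℝ)).subset hsub)

end OmegaAux

section OmegaMain

variable {Γ : AddSubgroup ℝ} {E : Type*} [Field E]

private theorem okSupp_min_le (f : HahnSeries ↥Γ E) (hf : f ≠ 0) :
    ∀ x ∈ f.support, ((f.isWF_support.min (HahnSeries.support_nonempty_iff.mpr hf) : ↥Γ) : ℝ)
      ≤ (x : ℝ) := by
  intro x hx
  exact_mod_cast f.isWF_support.min_le _ hx

private theorem bddSl_mul {f g : HahnSeries ↥Γ E} (hf : BddSl f.support)
    (hg : BddSl g.support) : BddSl (f * g).support := by
  by_cases hf0 : f = 0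
  · simp [hf0, BddSl, Sl]
  by_cases hg0 : g = 0
  · simp [hg0, BddSl, Sl]
  refine bddSl_mono HahnSeries.support_mul_subset ?_
  exact bddSl_add hf hg (okSupp_min_le f hf0) (okSupp_min_le g hg0)

private theorem pow_support_subset (u : HahnSeries ↥Γ E) :
    ∀ n : ℕ, ((u ^ n).support : Set ↥Γ) ⊆
      ((AddSubmonoid.closure u.support : AddSubmonoid ↥Γ) : Set ↥Γ) := by
  intro n
  induction n with
  | zero =>
    rw [pow_zero, HahnSeries.support_one]
    rintro x rfl
    exact AddSubmonoid.zero_mem _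
  | succ k ih =>
    rw [pow_succ]
    intro x hx
    obtain ⟨i, hi, j, hj, rfl⟩ := HahnSeries.support_mul_subset hx
    exact AddSubmonoid.add_mem _ (ih hi) (AddSubmonoid.subset_closure hj)

private theorem bddSl_inv {f : HahnSeries ↥Γ E} (hf0 : f ≠ 0) (hf : BddSl f.support) :
    BddSl (f⁻¹).support := by
  set s : HahnSeries ↥Γ E := HahnSeries.single (-f.order) (f.leadingCoeff)⁻¹ with hs
  have hu0 : 0 < (1 - s * f).orderTop :=
    HahnSeries.unit_aux f (inv_mul_cancel₀ (HahnSeries.leadingCoeff_ne_zero.mpr hf0)) _ (neg_add_cancel f.order)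
  set u : HahnSeries ↥Γ E := 1 - s * f with hudef
  set g : HahnSeries ↥Γ E := s * (HahnSeries.SummableFamily.powers u).hsum with hg
  have hfg : f * g = 1 := by
    have h := HahnSeries.SummableFamily.one_sub_self_mul_hsum_powers hu0
    have h1 : (1 : HahnSeries ↥Γ E) - u = s * f := by rw [hudef]; ring
    rw [h1] at h
    rw [hg, ← mul_assoc, mul_comm f s, h]
  have hinv : f⁻¹ = g := (eq_inv_of_mul_eq_one_right hfg).symm
  rw [hinv, hg]
  -- `s` has finite support, so it suffices to control the support of the sum
  have hsfin : BddSl s.support :=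
    bddSl_of_finite ((Set.finite_singleton (-f.order)).subset HahnSeries.support_single_subset)
  have hu : BddSl u.support := by
    refine bddSl_mono (show u.support ⊆ (1 : HahnSeries ↥Γ E).support ∪ (-(s * f)).support by
      rw [hudef, sub_eq_add_neg]; exact HahnSeries.support_add_subset _ _) (bddSl_union ?_ ?_)
    · exact bddSl_of_finite (by rw [HahnSeries.support_one]; exact Set.finite_singleton 0)
    · rw [HahnSeries.support_neg]
      exact bddSl_mul hsfin hf
  have hhsum : BddSl (HahnSeries.SummableFamily.powers u).hsum.support := by
    by_cases husupp : u.support = ∅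
    · -- u = 0, so all positive powers vanish
      have hu0' : u = 0 := HahnSeries.support_eq_empty_iff.mp husupp
      have hsub : (HahnSeries.SummableFamily.powers u).hsum.support ⊆ {0} := by
        refine (HahnSeries.SummableFamily.support_hsum_subset).trans ?_
        refine Set.iUnion_subset fun n => ?_
        rw [HahnSeries.SummableFamily.coe_powers hu0]
        cases n with
        | zero => rw [pow_zero, HahnSeries.support_one]
        | succ k =>
          rw [hu0', zero_pow (Nat.succ_ne_zero k), HahnSeries.support_zero]
          exact Set.empty_subset _
      exact bddSl_of_finite ((Set.finite_singleton 0).subset hsub)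
    · have hne : u.support.Nonempty := Set.nonempty_iff_ne_empty.mpr husupp
      set δΓ : ↥Γ := u.isWF_support.min hne with hδΓ
      have hδpos : (0 : ℝ) < (δΓ : ℝ) := by
        have hmem := u.isWF_support.min_mem hne
        have : 0 < u.orderTop := hu0
        have h2 : u.orderTop ≤ (δΓ : WithTop ↥Γ) :=
          HahnSeries.orderTop_le_of_coeff_ne_zero hmem
        have h3 : (0 : WithTop ↥Γ) < (δΓ : WithTop ↥Γ) := lt_of_lt_of_le this h2
        have h4 : (0 : ↥Γ) < δΓ := by exact_mod_cast h3
        exact_mod_cast h4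
      have hlb : ∀ x ∈ u.support, (δΓ : ℝ) ≤ (x : ℝ) := by
        intro x hx
        exact_mod_cast u.isWF_support.min_le hne hx
      have hclos := bddSl_closure hδpos hlb hu
      refine bddSl_mono ?_ hclos
      refine (HahnSeries.SummableFamily.support_hsum_subset).trans ?_
      refine Set.iUnion_subset fun n => ?_
      rw [HahnSeries.SummableFamily.coe_powers hu0]
      exact pow_support_subset u n
  exact bddSl_mul hsfin hhsum

end OmegaMain

/-- Let `E` be a field and `Γ` a subgroup of `ℝ`.  The set of generalized power series
whose support is either finite, or of order type `ω` and cofinal in `ℝ`, is a subfield of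
`E((t^Γ))`. -/
theorem omega_type_series_subfield (E : Type*) [Field E] (Γ : AddSubgroup ℝ) :
    ∃ F : Subfield (HahnSeries ↥Γ E),
      (F : Set (HahnSeries ↥Γ E)) =
        {f : HahnSeries ↥Γ E |
          f.support.Finite ∨
          ∃ φ : ℕ → ↥Γ, StrictMono φ ∧ Set.range φ = f.support ∧
            ∀ r : ℝ, ∃ k : ℕ, r < (φ k : ℝ)} := by
  refine ⟨{
    carrier := {f : HahnSeries ↥Γ E | BddSl f.support}
    zero_mem' := by simp [BddSl, Sl]
    one_mem' := bddSl_of_finite (by rw [HahnSeries.support_one]; exact Set.finite_singleton 0)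
    add_mem' := fun {a b} ha hb =>
      bddSl_mono (HahnSeries.support_add_subset _ _) (bddSl_union ha hb)
    neg_mem' := fun {a} ha => by
      show BddSl (-a).support
      rw [HahnSeries.support_neg]; exact ha
    mul_mem' := fun {a b} ha hb => bddSl_mul ha hb
    inv_mem' := by
      intro a ha
      by_cases ha0 : a = 0
      · simp only [ha0, inv_zero]
        exact ha0 ▸ ha
      · exact bddSl_inv ha0 ha }, ?_⟩
  ext f
  show BddSl f.support ↔ _
  constructor
  · intro hf
    by_cases hfin : f.support.Finite
    · exact Or.inl hfin
    · refine Or.inr ?_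
      have hne : ∀ y : ↥Γ, (f.support ∩ Set.Ioi y).Nonempty := by
        intro y
        by_contra hcon
        rw [Set.not_nonempty_iff_eq_empty] at hcon
        apply hfin
        refine (hf (y : ℝ)).subset ?_
        intro x hx
        refine ⟨hx, ?_⟩
        by_contra hxy
        push_neg at hxy
        have : x ∈ f.support ∩ Set.Ioi y := ⟨hx, by exact_mod_cast hxy⟩
        rw [hcon] at this
        exact this
      refine ⟨enumAux f.support f.isWF_support hne,
        enumAux_strictMono f.support f.isWF_support hne, ?_, ?_⟩
      · apply Set.eq_of_subset_of_subset
        · rintro _ ⟨n, rfl⟩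
          exact enumAux_mem f.support f.isWF_support hne n
        · intro x hx
          exact enumAux_surj f.support f.isWF_support hne hf hx
      · intro r
        by_contra hcon
        push_neg at hcon
        apply hfin
        refine (hf r).subset ?_
        intro x hx
        -- every support element is of the form `enumAux n` hence `≤ r`... we need cofinality
        -- directly: the range is infinite and contained in `Sl f.support r`
        exact ⟨hx, by
          obtain ⟨n, hn⟩ := enumAux_surj f.support f.isWF_support hne hf hx
          rw [← hn]; exact hcon n⟩
  · rintro (hfin | ⟨φ, hmono, hrange, hcof⟩)
    · exact bddSl_of_finite hfin
    · intro r
      obtain ⟨k, hk⟩ := hcof r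
      refine ((Set.finite_Iio k).image φ).subset ?_
      rintro x ⟨hx, hxr⟩
      rw [← hrange] at hx
      obtain ⟨i, rfl⟩ := hx
      refine ⟨i, ?_, rfl⟩
      have : (φ i : ℝ) < (φ k : ℝ) := lt_of_le_of_lt hxr hk
      have hlt : φ i < φ k := by exact_mod_cast this
      exact hmono.lt_iff_lt.mp hlt
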